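/- Let (G,·,1) be a solvable group whose derived series reaches the trivial subgroup after n+1 steps (equivalently, G admits a subnormal series of length n+1 with abelian factor groups). Then every finite subset C ⊆ G \ {1} contains a product-free subset of size at least (1/4)·|C|/2ⁿ. -/

import Mathlib

lemma countL1 (d : ℕ) (hd : 2 ≤ d) :
    d ≤ 4 * ((Finset.range d).filter (fun k => d ≤ 3*k ∧ 3*k < 2*d)).card := by
  have h : (Finset.range d).filter (fun k => d ≤ 3*k ∧ 3*k < 2*d)
      = Finset.Ico ((d+2)/3) ((2*d+2)/3) := by
    ext k
    simp only [Finset.mem_filter, Finset.mem_range, Finset.mem_Ico]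
    omega
  rw [h, Nat.card_Ico]
  obtain ⟨q, r, hr, rfl⟩ : ∃ q r, r < 3 ∧ d = 3*q+r := ⟨d/3, d%3, Nat.mod_lt _ (by norm_num), by omega⟩
  interval_cases r <;> omega

lemma embedL5 (a b : ℕ) (ha : 0 < a) (hb : 0 < b) :
    ∃ ι : ZMod a →+ ZMod (a*b), ∀ z : ZMod a, z ≠ 0 → ι z ≠ 0 := by
  haveI : NeZero a := ⟨ha.ne'⟩
  haveI : NeZero (a*b) := ⟨by positivity⟩
  have hf : ((Int.castAddHom (ZMod (a*b))).comp (AddMonoidHom.mulRight (b:ℤ))) (a : ℤ) = 0 := by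
    simp only [AddMonoidHom.comp_apply, AddMonoidHom.mulRight_apply, Int.coe_castAddHom]
    push_cast
    rw [show ((a : ZMod (a*b)) * b = ((a*b : ℕ) : ZMod (a*b))) by push_cast; ring]
    simp [ZMod.natCast_self]
  refine ⟨ZMod.lift a ⟨_, hf⟩, ?_⟩
  intro z hz
  have hzv : ((z.val : ℤ) : ZMod a) = z := by
    rw [Int.cast_natCast]; exact ZMod.natCast_rightInverse z
  have hval : (ZMod.lift a ⟨_, hf⟩) z = ((z.val * b : ℕ) : ZMod (a*b)) := by
    conv_lhs => rw [← hzv]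
    rw [ZMod.lift_coe]
    simp only [AddMonoidHom.comp_apply, AddMonoidHom.mulRight_apply, Int.coe_castAddHom]
    push_cast; ring
  rw [hval]
  intro h0
  rw [ZMod.natCast_eq_zero_iff] at h0
  have hdvd : a ∣ z.val := (Nat.mul_dvd_mul_iff_right hb).mp h0
  have h1 : z.val < a := ZMod.val_lt z
  have h2 : z.val ≠ 0 := fun h => hz ((ZMod.val_eq_zero z).mp h)
  exact absurd (Nat.le_of_dvd (Nat.pos_of_ne_zero h2) hdvd) (by omega)

open scoped Classical in
lemma zmodSubL2 (N : ℕ) [NeZero N] (D : AddSubgroup (ZMod N)) (g : ZMod N)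
    (hg : g ∈ D) (hg0 : g ≠ 0) [DecidablePred (· ∈ D)] :
    (Finset.univ.filter (fun z : ZMod N => z ∈ D)).card ≤
      4 * (Finset.univ.filter (fun z : ZMod N => z ∈ D ∧ N ≤ 3*z.val ∧ 3*z.val < 2*N)).card := by
  have hN : 0 < N := Nat.pos_of_ne_zero (NeZero.ne N)
  set P : ℕ → Prop := fun u => 0 < u ∧ ((u : ZMod N)) ∈ D with hP
  have hPg : P g.val := by
    constructor
    · have : g.val ≠ 0 := fun h => hg0 ((ZMod.val_eq_zero g).mp h)
      omega
    · rw [ZMod.natCast_rightInverse g]; exact hg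
  have hex : ∃ u, P u := ⟨g.val, hPg⟩
  set u := Nat.find hex with hu
  obtain ⟨hu0, huD⟩ : P u := Nat.find_spec hex
  have key : ∀ m : ℕ, ((m : ZMod N)) ∈ D → u ∣ m := by
    intro m hm
    have hcast : ((m % u : ℕ) : ZMod N) = (m : ZMod N) - (m/u) • ((u:ZMod N)) := by
      have : (m : ZMod N) = ((u * (m/u) + m % u : ℕ) : ZMod N) := by
        rw [Nat.div_add_mod]
      rw [this]
      push_cast
      rw [nsmul_eq_mul]
      push_cast
      ring
    have hmem : ((m % u : ℕ) : ZMod N) ∈ D := by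
      rw [hcast]; exact D.sub_mem hm (D.nsmul_mem huD _)
    by_contra hdvd
    have hr0 : m % u ≠ 0 := fun h => hdvd (Nat.dvd_of_mod_eq_zero h)
    have : P (m % u) := ⟨Nat.pos_of_ne_zero hr0, hmem⟩
    exact absurd (Nat.find_le this) (by
      have := Nat.mod_lt m hu0
      omega)
  have hNdvd : u ∣ N := key N (by simp [ZMod.natCast_self, D.zero_mem])
  have huN : u < N := by
    have h1 : u ≤ g.val := Nat.find_min' hex hPg
    have h2 : g.val < N := ZMod.val_lt g
    omega
  set d := N / u with hd
  have hNd : N = d * u := by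
    rw [hd, Nat.div_mul_cancel hNdvd]
  have hd2 : 2 ≤ d := by
    by_contra h
    push_neg at h
    interval_cases d <;> omega
  have hmemiff : ∀ z : ZMod N, z ∈ D ↔ ∃ k, k < d ∧ z = ((k*u : ℕ) : ZMod N) := by
    intro z
    constructor
    · intro hz
      have hzleft : ((z.val : ℕ) : ZMod N) ∈ D := by rw [ZMod.natCast_rightInverse z]; exact hz
      obtain ⟨k, hk⟩ := key z.val hzleft
      have hzN : z.val < N := ZMod.val_lt z
      refine ⟨k, ?_, ?_⟩
      · by_contra hkd
        push_neg at hkd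
        have : N ≤ z.val := by
          calc N = d * u := hNd
          _ ≤ k * u := Nat.mul_le_mul_right u hkd
          _ = u * k := Nat.mul_comm _ _
          _ = z.val := hk.symm
        omega
      · rw [← ZMod.natCast_rightInverse z, hk, Nat.mul_comm]
    · rintro ⟨k, hk, rfl⟩
      have : ((k*u : ℕ) : ZMod N) = k • ((u : ZMod N)) := by push_cast [nsmul_eq_mul]; ring
      rw [this]; exact D.nsmul_mem huD _
  have hval : ∀ k, k < d → ((k*u : ℕ) : ZMod N).val = k * u := by
    intro k hk
    apply ZMod.val_cast_of_lt
    calc k * u < d * u := (Nat.mul_lt_mul_right hu0).mpr hk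
    _ = N := hNd.symm
  have hinj : Set.InjOn (fun k : ℕ => ((k*u : ℕ) : ZMod N)) (Finset.range d) := by
    intro k1 h1 k2 h2 he
    simp only [Finset.coe_range, Set.mem_Iio] at h1 h2
    have he' : ((k1*u : ℕ) : ZMod N) = ((k2*u : ℕ) : ZMod N) := he
    have : k1 * u = k2 * u := by
      rw [← hval k1 h1, ← hval k2 h2, he']
    exact Nat.eq_of_mul_eq_mul_right hu0 this
  have hcardD : (Finset.univ.filter (fun z : ZMod N => z ∈ D)).card = d := by
    have : Finset.univ.filter (fun z : ZMod N => z ∈ D)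
        = (Finset.range d).image (fun k : ℕ => ((k*u : ℕ) : ZMod N)) := by
      ext z
      simp only [Finset.mem_filter, Finset.mem_univ, true_and, Finset.mem_image,
        Finset.mem_range]
      rw [hmemiff z]
      constructor
      · rintro ⟨k, hk, rfl⟩; exact ⟨k, hk, rfl⟩
      · rintro ⟨k, hk, rfl⟩; exact ⟨k, hk, rfl⟩
    rw [this, Finset.card_image_of_injOn hinj, Finset.card_range]
  have hsub : ((Finset.range d).filter (fun k => d ≤ 3*k ∧ 3*k < 2*d)).image
        (fun k : ℕ => ((k*u : ℕ) : ZMod N))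
      ⊆ Finset.univ.filter (fun z : ZMod N => z ∈ D ∧ N ≤ 3*z.val ∧ 3*z.val < 2*N) := by
    intro z hz
    simp only [Finset.mem_image, Finset.mem_filter, Finset.mem_range] at hz
    obtain ⟨k, ⟨hk, hk1, hk2⟩, rfl⟩ := hz
    simp only [Finset.mem_filter, Finset.mem_univ, true_and]
    refine ⟨(hmemiff _).mpr ⟨k, hk, rfl⟩, ?_, ?_⟩
    · rw [hval k hk, hNd]; nlinarith
    · rw [hval k hk, hNd]; nlinarith
  have hcount : ((Finset.range d).filter (fun k => d ≤ 3*k ∧ 3*k < 2*d)).card ≤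
      (Finset.univ.filter (fun z : ZMod N => z ∈ D ∧ N ≤ 3*z.val ∧ 3*z.val < 2*N)).card := by
    rw [← Finset.card_image_of_injOn (hinj.mono (by
      intro k hk
      simp only [Finset.coe_filter, Set.mem_setOf_eq, Finset.mem_range] at hk
      simp only [Finset.coe_range, Set.mem_Iio]
      exact hk.1))]
    exact Finset.card_le_card hsub
  have hL1 := countL1 d hd2
  omega

open scoped Classical in
lemma fiberL3 {V : Type*} [AddCommGroup V] [Fintype V] (N : ℕ) [NeZero N]
    (f : V →+ ZMod N) (c₀ : V) (hc₀ : f c₀ ≠ 0) :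
    Fintype.card V ≤
      4 * (Finset.univ.filter (fun v => N ≤ 3*(f v).val ∧ 3*(f v).val < 2*N)).card := by
  set D := f.range with hD
  set κ := (Finset.univ.filter (fun v => f v = 0)).card with hκ
  have hfiber : ∀ z : ZMod N, z ∈ D → (Finset.univ.filter (fun v => f v = z)).card = κ := by
    rintro z ⟨v₀, rfl⟩
    rw [hκ]
    apply Finset.card_bij' (fun v _ => v - v₀) (fun w _ => w + v₀)
    · intro v hv
      simp only [Finset.mem_filter, Finset.mem_univ, true_and] at hv ⊢
      simp [map_sub, hv]
    · intro w hw
      simp only [Finset.mem_filter, Finset.mem_univ, true_and] at hw ⊢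
      simp [map_add, hw]
    · intro v _; abel
    · intro w _; abel
  have htotal : Fintype.card V = (Finset.univ.filter (fun z : ZMod N => z ∈ D)).card * κ := by
    rw [← Finset.card_univ]
    rw [Finset.card_eq_sum_card_fiberwise (f := f) (t := Finset.univ.filter (fun z : ZMod N => z ∈ D))
      (fun v _ => by simp only [Finset.mem_coe, Finset.mem_filter, Finset.mem_univ, true_and]; exact ⟨v, rfl⟩)]
    rw [Finset.sum_congr rfl (fun z hz => hfiber z (Finset.mem_filter.mp hz).2)]
    rw [Finset.sum_const, smul_eq_mul]
  have hcount : (Finset.univ.filter (fun v => N ≤ 3*(f v).val ∧ 3*(f v).val < 2*N)).card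
      = (Finset.univ.filter (fun z : ZMod N => z ∈ D ∧ N ≤ 3*z.val ∧ 3*z.val < 2*N)).card * κ := by
    rw [Finset.card_eq_sum_card_fiberwise (f := f)
      (t := Finset.univ.filter (fun z : ZMod N => z ∈ D ∧ N ≤ 3*z.val ∧ 3*z.val < 2*N))
      (fun v hv => by
        simp only [Finset.mem_coe, Finset.mem_filter, Finset.mem_univ, true_and] at hv ⊢
        exact ⟨⟨v, rfl⟩, hv⟩)]
    rw [Finset.sum_congr rfl (fun z hz => ?_), Finset.sum_const, smul_eq_mul]
    have hz' := Finset.mem_filter.mp hz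
    rw [← hfiber z hz'.2.1]
    congr 1
    ext v
    simp only [Finset.mem_filter, Finset.mem_univ, true_and]
    constructor
    · rintro ⟨_, h⟩; exact h
    · rintro rfl
      exact ⟨hz'.2.2, rfl⟩
  have hL2 := zmodSubL2 N D (f c₀) ⟨c₀, rfl⟩ hc₀
  rw [htotal, hcount]
  calc (Finset.univ.filter (fun z : ZMod N => z ∈ D)).card * κ
      ≤ (4 * (Finset.univ.filter (fun z : ZMod N => z ∈ D ∧ N ≤ 3*z.val ∧ 3*z.val < 2*N)).card) * κ :=
        Nat.mul_le_mul_right κ hL2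
    _ = 4 * ((Finset.univ.filter (fun z : ZMod N => z ∈ D ∧ N ≤ 3*z.val ∧ 3*z.val < 2*N)).card * κ) := by ring


open scoped Classical in
lemma sepL4 {A : Type*} [AddCommGroup A] [AddGroup.FG A] {x : A} (hx : x ≠ 0) :
    ∃ N : ℕ, 0 < N ∧ ∃ φ : A →+ ZMod N, φ x ≠ 0 := by
  obtain ⟨n, ι, hι, p, hp, e, ⟨eq⟩⟩ := AddCommGroup.equiv_free_prod_directSum_zmod A
  have hy : eq x ≠ 0 := by
    intro h
    exact hx (by simpa using eq.injective (h.trans (map_zero eq).symm))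
  have hcases : (eq x).1 ≠ 0 ∨ (eq x).2 ≠ 0 := by
    by_contra h
    push_neg at h
    exact hy (Prod.ext h.1 h.2)
  rcases hcases with h1 | h2
  · obtain ⟨i, hi⟩ := Finsupp.ne_iff.mp h1
    simp only [Finsupp.coe_zero, Pi.zero_apply] at hi
    set M := ((eq x).1 i).natAbs with hM
    refine ⟨M + 1, Nat.succ_pos _,
      (Int.castAddHom (ZMod (M+1))).comp ((Finsupp.applyAddHom i).comp
        ((AddMonoidHom.fst _ _).comp eq.toAddMonoidHom)), ?_⟩
    simp only [AddMonoidHom.comp_apply, AddMonoidHom.coe_fst, Finsupp.applyAddHom_apply,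
      AddEquiv.coe_toAddMonoidHom, Int.coe_castAddHom]
    intro h0
    rw [ZMod.intCast_zmod_eq_zero_iff_dvd] at h0
    have := Int.le_of_dvd (by omega : (0:ℤ) < ((eq x).1 i).natAbs) ((Int.dvd_natAbs).mpr h0)
    omega
  · obtain ⟨i, hi⟩ := DFinsupp.ne_iff.mp h2
    simp only [DFinsupp.coe_zero, Pi.zero_apply] at hi
    refine ⟨p i ^ e i, pow_pos (hp i).pos _,
      (DFinsupp.evalAddMonoidHom i).comp ((AddMonoidHom.snd _ _).comp eq.toAddMonoidHom), ?_⟩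
    exact hi

open Finset in
open scoped Classical in
lemma coreL6 {A : Type*} [AddCommGroup A] (S : Finset A) (h0 : (0:A) ∉ S) (w : A → ℝ)
    (hw : ∀ a, 0 ≤ w a) :
    ∃ B ⊆ S, (∀ x ∈ B, ∀ y ∈ B, x + y ∉ B) ∧
      (1/4 : ℝ) * ∑ x ∈ S, w x ≤ ∑ x ∈ B, w x := by
  set H0 := AddSubgroup.closure (S : Set A) with hH0
  haveI : AddGroup.FG ↥H0 := AddGroup.closure_finset_fg S
  set inc : ↥S → ↥H0 := fun x => ⟨x.1, AddSubgroup.subset_closure (Finset.mem_coe.mpr x.2)⟩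
    with hinc
  have hincne : ∀ x : ↥S, inc x ≠ 0 := by
    intro x hx
    apply h0
    have : x.1 = 0 := congrArg Subtype.val hx
    exact this ▸ x.2
  have hsep : ∀ x : ↥S, ∃ N : ℕ, 0 < N ∧ ∃ φ : ↥H0 →+ ZMod N, φ (inc x) ≠ 0 :=
    fun x => sepL4 (hincne x)
  choose g hg hφ using hsep
  choose φ0 hφ0 using hφ
  set N := ∏ x : ↥S, g x with hN
  have hNpos : 0 < N := Finset.prod_pos (fun x _ => hg x)
  haveI : NeZero N := ⟨hNpos.ne'⟩
  have key : ∀ x : ↥S, ∃ φ : ↥H0 →+ ZMod N, φ (inc x) ≠ 0 := by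
    intro x
    have hsplit : N = g x * ∏ y ∈ Finset.univ.erase x, g y :=
      (Finset.mul_prod_erase Finset.univ g (Finset.mem_univ x)).symm
    rw [hsplit]
    obtain ⟨ι, hι⟩ := embedL5 (g x) _ (hg x)
      (Finset.prod_pos (fun y _ => hg y))
    exact ⟨ι.comp (φ0 x), hι _ (hφ0 x)⟩
  choose Φ hΦ using key
  -- the averaging space
  set χ : (↥S → ZMod N) → (↥H0 →+ ZMod N) :=
    fun c => ∑ y : ↥S, (c y).val • Φ y with hχ
  have hχeval : ∀ c x, χ c (inc x) = ∑ y : ↥S, c y * Φ y (inc x) := by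
    intro c x
    rw [hχ]
    rw [AddMonoidHom.finset_sum_apply]
    refine Finset.sum_congr rfl (fun y _ => ?_)
    show (c y).val • (Φ y (inc x)) = _
    rw [nsmul_eq_mul, ZMod.natCast_rightInverse (c y)]
  -- evaluation homs in c
  set e : ↑S → ((↑S → ZMod N) →+ ZMod N) :=
    fun x => AddMonoidHom.mk' (fun c => χ c (inc x)) (by
      intro c1 c2
      show χ (c1 + c2) (inc x) = χ c1 (inc x) + χ c2 (inc x)
      rw [hχeval, hχeval, hχeval, ← Finset.sum_add_distrib]
      refine Finset.sum_congr rfl (fun y _ => ?_)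
      simp [add_mul]) with he
  have heval : ∀ x c, e x c = χ c (inc x) := fun x c => rfl
  have hene : ∀ x : ↑S, e x (Pi.single x 1) ≠ 0 := by
    intro x
    rw [heval, hχeval]
    rw [Finset.sum_eq_single x]
    · simpa using hΦ x
    · intro y _ hy
      simp [Pi.single_eq_of_ne hy]
    · intro h; exact absurd (Finset.mem_univ x) h
  -- counting per x
  have hcount : ∀ x : ↑S, (Fintype.card (↑S → ZMod N) : ℝ) ≤
      4 * ((Finset.univ.filter (fun c : ↑S → ZMod N =>
        N ≤ 3*(χ c (inc x)).val ∧ 3*(χ c (inc x)).val < 2*N)).card : ℝ) := by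
    intro x
    have := fiberL3 N (e x) (Pi.single x 1) (hene x)
    have h2 : (Finset.univ.filter (fun c : ↑S → ZMod N =>
        N ≤ 3*((e x) c).val ∧ 3*((e x) c).val < 2*N)).card =
        (Finset.univ.filter (fun c : ↑S → ZMod N =>
        N ≤ 3*(χ c (inc x)).val ∧ 3*(χ c (inc x)).val < 2*N)).card := rfl
    rw [h2] at this
    exact_mod_cast this
  -- the candidate sets
  set P : (↑S → ZMod N) → ↑S → Prop :=
    fun c x => N ≤ 3*(χ c (inc x)).val ∧ 3*(χ c (inc x)).val < 2*N with hPdef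
  set T : (↑S → ZMod N) → Finset ↑S := fun c => S.attach.filter (P c) with hT
  -- averaging
  have havg : ∃ c : ↑S → ZMod N, (1/4 : ℝ) * ∑ x ∈ S, w x ≤ ∑ x ∈ T c, w x.1 := by
    have hswap : ∑ c : ↑S → ZMod N, ∑ x ∈ T c, w x.1
        = ∑ x ∈ S.attach, ((Finset.univ.filter (fun c => P c x)).card : ℝ) * w x.1 := by
      rw [Finset.sum_congr rfl (fun c _ => Finset.sum_filter (P c) (fun x => w x.1))]
      rw [Finset.sum_comm]
      refine Finset.sum_congr rfl (fun x _ => ?_)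
      rw [← Finset.sum_filter, Finset.sum_const, nsmul_eq_mul]
    have hlow : ∀ x ∈ S.attach, (Fintype.card (↑S → ZMod N) : ℝ) * ((1/4 : ℝ) * w x.1)
        ≤ ((Finset.univ.filter (fun c => P c x)).card : ℝ) * w x.1 := by
      intro x _
      have h1 := hcount x
      have h2 := hw x.1
      have h3 : (Fintype.card (↑S → ZMod N) : ℝ) * (1/4 : ℝ)
          ≤ ((Finset.univ.filter (fun c => P c x)).card : ℝ) := by
        simp only [hPdef]
        nlinarith [h1]
      nlinarith [h3, h2]
    have hsum : ∑ c : ↑S → ZMod N, ((1/4 : ℝ) * ∑ x ∈ S, w x)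
        ≤ ∑ c : ↑S → ZMod N, ∑ x ∈ T c, w x.1 := by
      rw [hswap, Finset.sum_const, nsmul_eq_mul, ← Finset.sum_attach S w,
        Finset.mul_sum, Finset.mul_sum]
      exact Finset.sum_le_sum hlow
    obtain ⟨c, _, hc⟩ := Finset.exists_le_of_sum_le (Finset.univ_nonempty) hsum
    exact ⟨c, hc⟩
  obtain ⟨c, hc⟩ := havg
  refine ⟨(T c).image Subtype.val, ?_, ?_, ?_⟩
  · intro a ha
    obtain ⟨x, hx, rfl⟩ := Finset.mem_image.mp ha
    exact x.2
  · intro a ha b hb hab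
    obtain ⟨xa, hxa, rfl⟩ := Finset.mem_image.mp ha
    obtain ⟨xb, hxb, rfl⟩ := Finset.mem_image.mp hb
    obtain ⟨xs, hxs, hxsval⟩ := Finset.mem_image.mp hab
    have hincadd : inc xs = inc xa + inc xb := by
      apply Subtype.ext
      exact hxsval
    obtain ⟨ha1, ha2⟩ := (Finset.mem_filter.mp hxa).2
    obtain ⟨hb1, hb2⟩ := (Finset.mem_filter.mp hxb).2
    obtain ⟨hs1, hs2⟩ := (Finset.mem_filter.mp hxs).2
    rw [hincadd, map_add] at hs1 hs2
    set z1 := χ c (inc xa)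
    set z2 := χ c (inc xb)
    have hv1 : z1.val < N := ZMod.val_lt z1
    have hv2 : z2.val < N := ZMod.val_lt z2
    have hvadd : (z1 + z2).val = (z1.val + z2.val) % N := ZMod.val_add z1 z2
    have hmod : (z1.val + z2.val) % N = z1.val + z2.val ∨
        (z1.val + z2.val) % N = z1.val + z2.val - N := by
      rcases Nat.lt_or_ge (z1.val + z2.val) N with h | h
      · exact Or.inl (Nat.mod_eq_of_lt h)
      · right
        rw [Nat.mod_eq_sub_mod h, Nat.mod_eq_of_lt (by omega)]
    rcases hmod with h | h <;> omega
  · rw [Finset.sum_image (fun x _ y _ h => Subtype.ext h)]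
    exact hc

lemma coreMul {H : Type*} [CommGroup H] (S : Finset H) (h1 : (1:H) ∉ S) (w : H → ℝ)
    (hw : ∀ a, 0 ≤ w a) :
    ∃ B ⊆ S, (∀ x ∈ B, ∀ y ∈ B, x * y ∉ B) ∧
      (1/4 : ℝ) * ∑ x ∈ S, w x ≤ ∑ x ∈ B, w x := by
  set S' : Finset (Additive H) := S.map (Additive.ofMul).toEmbedding with hS'
  have h0 : (0 : Additive H) ∉ S' := by
    intro h
    obtain ⟨x, hx, hx0⟩ := Finset.mem_map.mp h
    have : x = 1 := by
      simpa using hx0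
    exact h1 (this ▸ hx)
  obtain ⟨B', hB'S, hB'free, hB'sum⟩ := coreL6 S' h0 (fun a => w a.toMul)
    (fun a => hw _)
  refine ⟨B'.map (Additive.toMul).toEmbedding, ?_, ?_, ?_⟩
  · intro b hb
    obtain ⟨b', hb', rfl⟩ := Finset.mem_map.mp hb
    obtain ⟨x, hx, rfl⟩ := Finset.mem_map.mp (hB'S hb')
    simpa using hx
  · intro x hx y hy hxy
    obtain ⟨x', hx', rfl⟩ := Finset.mem_map.mp hx
    obtain ⟨y', hy', rfl⟩ := Finset.mem_map.mp hy
    obtain ⟨z', hz', hz'e⟩ := Finset.mem_map.mp hxy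
    have : z' = x' + y' := by
      apply Additive.toMul.injective
      simpa using hz'e
    exact hB'free x' hx' y' hy' (this ▸ hz')
  · rw [Finset.sum_map]
    have hS : ∑ x ∈ S', w (Additive.toMul x) = ∑ x ∈ S, w x := by
      rw [hS', Finset.sum_map]
      rfl
    rw [← hS]
    exact hB'sum

open scoped Classical in
open scoped commutatorElement in
theorem mainAux : ∀ (n : ℕ) (G : Type u) (_ : Group G)
    (_ : derivedSeries G (n+1) = ⊥) (C : Finset G), (1:G) ∉ C →
    ∃ A, A ⊆ C ∧ (∀ x ∈ A, ∀ y ∈ A, x * y ∉ A) ∧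
      (1 / 4 : ℝ) * C.card / 2 ^ n ≤ A.card := by
  intro n
  induction n with
  | zero =>
    intro G _ hG C hC
    have hcomm : ∀ a b : G, a * b = b * a := by
      intro a b
      have h1 : ⁅a,b⁆ ∈ derivedSeries G 1 := by
        rw [derivedSeries_succ]
        exact Subgroup.commutator_mem_commutator (by simp [derivedSeries_zero])
          (by simp [derivedSeries_zero])
      rw [hG] at h1
      exact (commutatorElement_eq_one_iff_commute.mp (Subgroup.mem_bot.mp h1))
    letI : CommGroup G := { (inferInstance : Group G) with mul_comm := hcomm }
    obtain ⟨B, hBS, hBfree, hBsum⟩ := coreMul C hC (fun _ => (1:ℝ)) (fun _ => zero_le_one)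
    refine ⟨B, hBS, hBfree, ?_⟩
    simp only [Finset.sum_const, nsmul_eq_mul, mul_one] at hBsum
    simpa using hBsum
  | succ n IH =>
    intro G _ hG C hC
    set Nsg := derivedSeries G 1 with hNsg
    haveI hNorm : Nsg.Normal := derivedSeries_normal G 1
    set C1 := C.filter (· ∈ Nsg) with hC1
    set C2 := C.filter (fun x => ¬ (x ∈ Nsg)) with hC2
    have hsplit : C1.card + C2.card = C.card := Finset.card_filter_add_card_filter_not _
    rcases le_or_gt C.card (2 * C2.card) with hbig | hsm
    · -- quotient case
      set Q := G ⧸ Nsg with hQ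
      have hcommQ : ∀ a b : Q, a * b = b * a := by
        intro a b
        refine QuotientGroup.induction_on a (fun x => ?_)
        refine QuotientGroup.induction_on b (fun y => ?_)
        show ((x*y : G) : Q) = ((y*x : G) : Q)
        rw [QuotientGroup.eq]
        have : (x*y)⁻¹ * (y*x) = ⁅y⁻¹, x⁻¹⁆ := by
          simp [commutatorElement_def, mul_assoc]
        rw [this, hNsg, derivedSeries_succ]
        exact Subgroup.commutator_mem_commutator (by simp [derivedSeries_zero])
          (by simp [derivedSeries_zero])
      letI : CommGroup Q := { (inferInstance : Group Q) with mul_comm := hcommQ }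
      set π := QuotientGroup.mk' Nsg with hπ
      set S := C2.image π with hS
      have h1S : (1:Q) ∉ S := by
        intro h
        obtain ⟨x, hx, hx1⟩ := Finset.mem_image.mp h
        have hxN : x ∈ Nsg := (QuotientGroup.eq_one_iff x).mp hx1
        exact (Finset.mem_filter.mp hx).2 hxN
      obtain ⟨B, hBS, hBfree, hBsum⟩ := coreMul S h1S
        (fun q => ((C2.filter (fun x => π x = q)).card : ℝ)) (fun q => Nat.cast_nonneg _)
      set A := C2.filter (fun x => π x ∈ B) with hA
      have hAC : A ⊆ C := (Finset.filter_subset _ _).trans (Finset.filter_subset _ _)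
      have hAfree : ∀ x ∈ A, ∀ y ∈ A, x * y ∉ A := by
        intro x hx y hy hxy
        have hx' := (Finset.mem_filter.mp hx).2
        have hy' := (Finset.mem_filter.mp hy).2
        have hxy' := (Finset.mem_filter.mp hxy).2
        rw [map_mul] at hxy'
        exact hBfree _ hx' _ hy' hxy'
      have hAcard : (A.card : ℝ) = ∑ q ∈ B, ((C2.filter (fun x => π x = q)).card : ℝ) := by
        rw [Finset.card_eq_sum_card_fiberwise (f := π) (s := A) (t := B)
          (fun x hx => (Finset.mem_filter.mp (Finset.mem_coe.mp hx)).2)]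
        push_cast
        refine Finset.sum_congr rfl (fun q hq => ?_)
        congr 2
        ext x
        simp only [hA, Finset.filter_filter, Finset.mem_filter]
        constructor
        · rintro ⟨h1, _, h3⟩; exact ⟨h1, h3⟩
        · rintro ⟨h1, h3⟩
          exact ⟨h1, by rw [h3]; exact hq, h3⟩
      have hC2card : ∑ q ∈ S, ((C2.filter (fun x => π x = q)).card : ℝ) = C2.card := by
        rw [← Nat.cast_sum]
        norm_cast
        exact (Finset.card_eq_sum_card_image π C2).symm
      refine ⟨A, hAC, hAfree, ?_⟩
      rw [hAcard]
      calc (1/4 : ℝ) * C.card / 2^(n+1) ≤ (1/4 : ℝ) * (2 * C2.card) / 2^(n+1) := by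
            have : (C.card : ℝ) ≤ 2 * C2.card := by exact_mod_cast hbig
            gcongr
        _ ≤ (1/4 : ℝ) * C2.card := by
            have h2 : (2:ℝ) ≤ 2^(n+1) := by
              calc (2:ℝ) = 2^1 := (pow_one 2).symm
              _ ≤ 2^(n+1) := by
                apply pow_le_pow_right₀ (by norm_num)
                omega
            have h3 : (0:ℝ) ≤ (C2.card : ℝ) := Nat.cast_nonneg _
            rw [div_le_iff₀ (by positivity)]
            nlinarith
        _ = (1/4 : ℝ) * ∑ q ∈ S, ((C2.filter (fun x => π x = q)).card : ℝ) := by rw [hC2card]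
        _ ≤ ∑ q ∈ B, ((C2.filter (fun x => π x = q)).card : ℝ) := hBsum
    · -- subgroup case
      have hC1big : C.card ≤ 2 * C1.card := by omega
      have hmap : ∀ k, Subgroup.map Nsg.subtype (derivedSeries ↥Nsg k) = derivedSeries G (k+1) := by
        intro k
        induction k with
        | zero =>
          rw [derivedSeries_zero, ← MonoidHom.range_eq_map, Subgroup.range_subtype]
        | succ k ih =>
          rw [derivedSeries_succ, Subgroup.map_commutator, ih, ← derivedSeries_succ]
      have hsolv : derivedSeries ↥Nsg (n+1) = ⊥ := by
        have h := hmap (n+1)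
        rw [hG] at h
        rwa [Subgroup.map_eq_bot_iff, Subgroup.ker_subtype, le_bot_iff] at h
      set C1' : Finset ↥Nsg := C1.subtype (· ∈ Nsg) with hC1'
      have h1C1' : (1 : ↥Nsg) ∉ C1' := by
        intro h
        have h2 := Finset.mem_subtype.mp h
        exact hC (Finset.mem_of_mem_filter _ h2)
      obtain ⟨A', hA'sub, hA'free, hA'card⟩ := IH ↥Nsg inferInstance hsolv C1' h1C1'
      refine ⟨A'.map (Function.Embedding.subtype _), ?_, ?_, ?_⟩
      · intro a ha
        obtain ⟨x, hx, rfl⟩ := Finset.mem_map.mp ha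
        exact Finset.mem_of_mem_filter _ (Finset.mem_subtype.mp (hA'sub hx))
      · intro x hx y hy hxy
        obtain ⟨x', hx', rfl⟩ := Finset.mem_map.mp hx
        obtain ⟨y', hy', rfl⟩ := Finset.mem_map.mp hy
        obtain ⟨z', hz', hz'e⟩ := Finset.mem_map.mp hxy
        have hzeq : z' = x' * y' := Subtype.ext (by
          simpa [Function.Embedding.coe_subtype] using hz'e)
        exact hA'free x' hx' y' hy' (hzeq ▸ hz')
      · rw [Finset.card_map]
        have hcc : C1'.card = C1.card := by
          rw [hC1', Finset.card_subtype]
          congr 1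
          apply Finset.filter_true_of_mem
          intro x hx
          exact (Finset.mem_filter.mp hx).2
        calc (1/4:ℝ) * C.card / 2^(n+1) ≤ (1/4:ℝ)*(2*C1.card)/2^(n+1) := by
              have : (C.card : ℝ) ≤ 2*C1.card := by exact_mod_cast hC1big
              gcongr
          _ = (1/4:ℝ)*C1.card/2^n := by
              rw [pow_succ]
              ring
          _ = (1/4:ℝ)*C1'.card/2^n := by rw [hcc]
          _ ≤ A'.card := hA'card


theorem stmt15 {G : Type*} [Group G] (n : ℕ) (hG : derivedSeries G (n + 1) = ⊥)
    (C : Finset G) (hC : (1 : G) ∉ C) :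
    ∃ A ⊆ C, (∀ x ∈ A, ∀ y ∈ A, x * y ∉ A) ∧
      (1 / 4 : ℝ) * C.card / 2 ^ n ≤ A.card := by
  obtain ⟨A, h1, h2, h3⟩ := mainAux n G ‹_› hG C hC
  exact ⟨A, h1, h2, h3⟩
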